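/- Let ω ∈ ℂ* and g ∈ ℂ(t) a nonzero rational function satisfying g(ω t^{−1}) + g(t) = 0. Then g(t) = b · t^k(t² − ω)·∏_{i=1}^{l}(t − λ_i)(λ_i t − ω) / ∏_{i=1}^{m}(t − μ_i)(μ_i t − ω) for some b ∈ ℂ*, k ∈ ℤ, nonnegative integers l, m with m = l + k + 1, and λ_i, μ_i ∈ ℂ* (not necessarily distinct). -/

import Mathlib

open Polynomial

namespace Stmt18Aux

noncomputable def sF (ω : ℂ) : RatFunc ℂ := RatFunc.X + RatFunc.C ω * (RatFunc.X)⁻¹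

lemma C_ne_zero {c : ℂ} (hc : c ≠ 0) : (RatFunc.C c : RatFunc ℂ) ≠ 0 := by
  rw [← RatFunc.algebraMap_C]
  exact RatFunc.algebraMap_ne_zero (by simpa using hc)

lemma X_sub_C_ne (c : ℂ) : (RatFunc.X : RatFunc ℂ) - RatFunc.C c ≠ 0 := by
  intro h
  have h2 : (algebraMap ℂ[X] (RatFunc ℂ)) (Polynomial.X - Polynomial.C c) = 0 := by
    rw [map_sub, RatFunc.algebraMap_X, RatFunc.algebraMap_C]; exact h
  have h3 : (Polynomial.X - Polynomial.C c : ℂ[X]) = 0 :=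
    (map_eq_zero_iff _ (RatFunc.algebraMap_injective ℂ)).mp h2
  exact Polynomial.X_sub_C_ne_zero c h3

lemma X_sq_sub_C_ne {ω : ℂ} : (RatFunc.X : RatFunc ℂ) ^ 2 - RatFunc.C ω ≠ 0 := by
  intro h
  have h2 : (algebraMap ℂ[X] (RatFunc ℂ)) (Polynomial.X ^ 2 - Polynomial.C ω) = 0 := by
    rw [map_sub, map_pow, RatFunc.algebraMap_X, RatFunc.algebraMap_C]; exact h
  have h3 : (Polynomial.X ^ 2 - Polynomial.C ω : ℂ[X]) = 0 :=
    (map_eq_zero_iff _ (RatFunc.algebraMap_injective ℂ)).mp h2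
  have := congrArg (fun p => Polynomial.coeff p 2) h3
  simp [Polynomial.coeff_X_pow] at this

lemma sF_ne_C (ω : ℂ) (r : ℂ) : sF ω ≠ RatFunc.C r := by
  intro h
  have hX : (RatFunc.X : RatFunc ℂ) ≠ 0 := RatFunc.X_ne_zero
  have h1 : (RatFunc.X : RatFunc ℂ) ^ 2 + RatFunc.C ω = RatFunc.C r * RatFunc.X := by
    have := congrArg (· * RatFunc.X) h
    simp only [sF] at this
    field_simp at this
    linear_combination this
  have h2 : (algebraMap ℂ[X] (RatFunc ℂ)) (Polynomial.X ^ 2 + Polynomial.C ω) =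
      (algebraMap ℂ[X] (RatFunc ℂ)) (Polynomial.C r * Polynomial.X) := by
    simp only [map_add, map_mul, map_pow, RatFunc.algebraMap_X, RatFunc.algebraMap_C]
    exact h1
  have h3 := RatFunc.algebraMap_injective ℂ h2
  have := congrArg (fun p => Polynomial.coeff p 2) h3
  simp [Polynomial.coeff_X_pow] at this

/-- transcendence of `sF` over the constants -/
lemma aeval_sF_ne_zero (ω : ℂ) {q : ℂ[X]} (hq : q ≠ 0) :
    Polynomial.aeval (sF ω) q ≠ 0 := by
  intro h0
  have hsplit : q.Splits := IsAlgClosed.splits q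
  have hfact := hsplit.eq_prod_roots
  have := congrArg (Polynomial.aeval (sF ω)) hfact
  rw [h0, map_mul, Polynomial.aeval_C] at this
  have hlc : (algebraMap ℂ (RatFunc ℂ)) q.leadingCoeff ≠ 0 := by
    rw [RatFunc.algebraMap_eq_C]
    exact C_ne_zero (Polynomial.leadingCoeff_ne_zero.mpr hq)
  have hprod : Polynomial.aeval (sF ω)
      (q.roots.map fun a => Polynomial.X - Polynomial.C a).prod = 0 := by
    rcases mul_eq_zero.mp this.symm with h | h
    · exact absurd h hlc
    · exact h
  rw [map_multiset_prod, Multiset.prod_eq_zero_iff, Multiset.mem_map] at hprod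
  obtain ⟨x, hx, hxz⟩ := hprod
  rw [Multiset.mem_map] at hx
  obtain ⟨r, _, rfl⟩ := hx
  rw [map_sub, Polynomial.aeval_X, Polynomial.aeval_C, sub_eq_zero,
    RatFunc.algebraMap_eq_C] at hxz
  exact sF_ne_C ω r hxz

def Rset (ω : ℂ) : Set (RatFunc ℂ) :=
  {x | ∃ p q : ℂ[X], q ≠ 0 ∧ x = Polynomial.aeval (sF ω) p / Polynomial.aeval (sF ω) q}

lemma mem_Rset_aeval (ω : ℂ) (p : ℂ[X]) : Polynomial.aeval (sF ω) p ∈ Rset ω :=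
  ⟨p, 1, one_ne_zero, by simp⟩

lemma zero_mem_Rset (ω : ℂ) : (0 : RatFunc ℂ) ∈ Rset ω := by
  simpa using mem_Rset_aeval ω 0

lemma one_mem_Rset (ω : ℂ) : (1 : RatFunc ℂ) ∈ Rset ω := by
  simpa using mem_Rset_aeval ω 1

lemma C_mem_Rset (ω : ℂ) (c : ℂ) : (RatFunc.C c : RatFunc ℂ) ∈ Rset ω := by
  have := mem_Rset_aeval ω (Polynomial.C c)
  rwa [Polynomial.aeval_C, RatFunc.algebraMap_eq_C] at this

lemma sF_mem_Rset (ω : ℂ) : sF ω ∈ Rset ω := by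
  have := mem_Rset_aeval ω Polynomial.X
  rwa [Polynomial.aeval_X] at this

lemma add_mem_Rset {ω : ℂ} {x y : RatFunc ℂ} (hx : x ∈ Rset ω) (hy : y ∈ Rset ω) :
    x + y ∈ Rset ω := by
  obtain ⟨p1, q1, hq1, rfl⟩ := hx
  obtain ⟨p2, q2, hq2, rfl⟩ := hy
  refine ⟨p1 * q2 + p2 * q1, q1 * q2, mul_ne_zero hq1 hq2, ?_⟩
  have h1 := aeval_sF_ne_zero ω hq1
  have h2 := aeval_sF_ne_zero ω hq2
  simp only [map_add, map_mul]
  field_simp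

lemma mul_mem_Rset {ω : ℂ} {x y : RatFunc ℂ} (hx : x ∈ Rset ω) (hy : y ∈ Rset ω) :
    x * y ∈ Rset ω := by
  obtain ⟨p1, q1, hq1, rfl⟩ := hx
  obtain ⟨p2, q2, hq2, rfl⟩ := hy
  refine ⟨p1 * p2, q1 * q2, mul_ne_zero hq1 hq2, ?_⟩
  simp only [map_mul]
  ring

lemma neg_mem_Rset {ω : ℂ} {x : RatFunc ℂ} (hx : x ∈ Rset ω) : -x ∈ Rset ω := by
  obtain ⟨p1, q1, hq1, rfl⟩ := hx
  exact ⟨-p1, q1, hq1, by rw [map_neg]; exact (neg_div _ _).symm⟩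

lemma sub_mem_Rset {ω : ℂ} {x y : RatFunc ℂ} (hx : x ∈ Rset ω) (hy : y ∈ Rset ω) :
    x - y ∈ Rset ω := by
  rw [sub_eq_add_neg]; exact add_mem_Rset hx (neg_mem_Rset hy)

lemma inv_mem_Rset {ω : ℂ} {x : RatFunc ℂ} (hx : x ∈ Rset ω) : x⁻¹ ∈ Rset ω := by
  obtain ⟨p1, q1, hq1, rfl⟩ := hx
  by_cases hp : p1 = 0
  · subst hp; simpa using zero_mem_Rset ω
  · exact ⟨q1, p1, hp, by rw [inv_div]⟩

section Sigma
variable {ω : ℂ} {σ : RatFunc ℂ →ₐ[ℂ] RatFunc ℂ}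

lemma sigma_C (σ : RatFunc ℂ →ₐ[ℂ] RatFunc ℂ) (c : ℂ) : σ (RatFunc.C c) = RatFunc.C c := by
  have := σ.commutes c
  rwa [RatFunc.algebraMap_eq_C] at this

lemma sigma_sF (hω : ω ≠ 0) (hσ : σ RatFunc.X = RatFunc.C ω * (RatFunc.X)⁻¹) :
    σ (sF ω) = sF ω := by
  have hX : (RatFunc.X : RatFunc ℂ) ≠ 0 := RatFunc.X_ne_zero
  have hCω : (RatFunc.C ω : RatFunc ℂ) ≠ 0 := C_ne_zero hω
  rw [sF, map_add, map_mul, map_inv₀, hσ, sigma_C]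
  field_simp
  ring

lemma sigma_X_eq (hσ : σ RatFunc.X = RatFunc.C ω * (RatFunc.X)⁻¹) :
    σ RatFunc.X = sF ω - RatFunc.X := by
  rw [hσ, sF]; ring

lemma sigma_fix (hs : σ (sF ω) = sF ω) {x : RatFunc ℂ} (hx : x ∈ Rset ω) : σ x = x := by
  obtain ⟨p, q, hq, rfl⟩ := hx
  rw [map_div₀, ← Polynomial.aeval_algHom_apply, ← Polynomial.aeval_algHom_apply, hs]

lemma sigma_inj (σ : RatFunc ℂ →ₐ[ℂ] RatFunc ℂ) : Function.Injective σ :=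
  RingHom.injective (σ.toRingHom : RatFunc ℂ →+* RatFunc ℂ)

end Sigma

def Dec (ω : ℂ) (g : RatFunc ℂ) : Prop :=
  ∃ a ∈ Rset ω, ∃ b ∈ Rset ω, g = a + b * RatFunc.X

lemma s_mul_X (ω : ℂ) : sF ω * RatFunc.X = RatFunc.X ^ 2 + RatFunc.C ω := by
  have hX : (RatFunc.X : RatFunc ℂ) ≠ 0 := RatFunc.X_ne_zero
  rw [sF]; field_simp

lemma dec_zero (ω : ℂ) : Dec ω 0 :=
  ⟨0, zero_mem_Rset ω, 0, zero_mem_Rset ω, by ring⟩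

lemma dec_C (ω : ℂ) (c : ℂ) : Dec ω (RatFunc.C c) :=
  ⟨RatFunc.C c, C_mem_Rset ω c, 0, zero_mem_Rset ω, by ring⟩

lemma dec_X (ω : ℂ) : Dec ω RatFunc.X :=
  ⟨0, zero_mem_Rset ω, 1, one_mem_Rset ω, by ring⟩

lemma dec_add {ω : ℂ} {x y : RatFunc ℂ} (hx : Dec ω x) (hy : Dec ω y) : Dec ω (x + y) := by
  obtain ⟨a, ha, b, hb, rfl⟩ := hx
  obtain ⟨c, hc, d, hd, rfl⟩ := hy
  exact ⟨a + c, add_mem_Rset ha hc, b + d, add_mem_Rset hb hd, by ring⟩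

lemma dec_mul {ω : ℂ} {x y : RatFunc ℂ} (hx : Dec ω x) (hy : Dec ω y) : Dec ω (x * y) := by
  obtain ⟨a, ha, b, hb, rfl⟩ := hx
  obtain ⟨c, hc, d, hd, rfl⟩ := hy
  refine ⟨a * c - RatFunc.C ω * (b * d),
    sub_mem_Rset (mul_mem_Rset ha hc)
      (mul_mem_Rset (C_mem_Rset ω ω) (mul_mem_Rset hb hd)),
    a * d + b * c + b * d * sF ω,
    add_mem_Rset (add_mem_Rset (mul_mem_Rset ha hd) (mul_mem_Rset hb hc))
      (mul_mem_Rset (mul_mem_Rset hb hd) (sF_mem_Rset ω)), ?_⟩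
  linear_combination (-(b * d)) * s_mul_X ω

lemma dec_inv {ω : ℂ} {σ : RatFunc ℂ →ₐ[ℂ] RatFunc ℂ}
    (hσ : σ RatFunc.X = RatFunc.C ω * (RatFunc.X)⁻¹) (hs : σ (sF ω) = sF ω)
    {x : RatFunc ℂ} (hx : Dec ω x) : Dec ω x⁻¹ := by
  by_cases h0 : x = 0
  · subst h0; simpa using dec_zero ω
  obtain ⟨a, ha, b, hb, rfl⟩ := hx
  set D : RatFunc ℂ := a ^ 2 + a * b * sF ω + RatFunc.C ω * b ^ 2 with hD
  have hprod : (a + b * RatFunc.X) * ((a + b * sF ω) + (-b) * RatFunc.X) = D := by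
    rw [hD]; linear_combination (b ^ 2) * s_mul_X ω
  have hσx : σ (a + b * RatFunc.X) = (a + b * sF ω) + (-b) * RatFunc.X := by
    rw [map_add, map_mul, sigma_fix hs ha, sigma_fix hs hb, sigma_X_eq hσ]; ring
  have hσne : σ (a + b * RatFunc.X) ≠ 0 := fun h =>
    h0 (sigma_inj σ (h.trans (map_zero σ).symm))
  have hDne : D ≠ 0 := by
    rw [← hprod, ← hσx]
    exact mul_ne_zero h0 hσne
  have key : (a + b * RatFunc.X) *
      (((a + b * sF ω) * D⁻¹) + (-b * D⁻¹) * RatFunc.X) = 1 := by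
    have : (((a + b * sF ω) * D⁻¹) + (-b * D⁻¹) * RatFunc.X)
        = ((a + b * sF ω) + (-b) * RatFunc.X) * D⁻¹ := by ring
    rw [this, ← mul_assoc, hprod, mul_inv_cancel₀ hDne]
  have hDmem : D ∈ Rset ω := by
    have h1 : D = a * a + a * b * sF ω + RatFunc.C ω * (b * b) := by rw [hD]; ring
    rw [h1]
    exact add_mem_Rset (add_mem_Rset (mul_mem_Rset ha ha)
      (mul_mem_Rset (mul_mem_Rset ha hb) (sF_mem_Rset ω)))
      (mul_mem_Rset (C_mem_Rset ω ω) (mul_mem_Rset hb hb))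
  refine ⟨(a + b * sF ω) * D⁻¹, ?_, -b * D⁻¹, ?_, inv_eq_of_mul_eq_one_right key⟩
  · exact mul_mem_Rset (add_mem_Rset ha (mul_mem_Rset hb (sF_mem_Rset ω))) (inv_mem_Rset hDmem)
  · exact mul_mem_Rset (neg_mem_Rset hb) (inv_mem_Rset hDmem)

lemma dec_poly {ω : ℂ} (p : ℂ[X]) : Dec ω (algebraMap ℂ[X] (RatFunc ℂ) p) := by
  induction p using Polynomial.induction_on with
  | C c => rw [RatFunc.algebraMap_C]; exact dec_C ω c
  | add p q hp hq => rw [map_add]; exact dec_add hp hq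
  | monomial n c ih =>
      have h : (algebraMap ℂ[X] (RatFunc ℂ)) (Polynomial.C c * Polynomial.X ^ (n + 1))
          = (algebraMap ℂ[X] (RatFunc ℂ)) (Polynomial.C c * Polynomial.X ^ n) * RatFunc.X := by
        rw [map_mul, map_mul, map_pow, map_pow, RatFunc.algebraMap_X]; ring
      rw [h]; exact dec_mul ih (dec_X ω)

lemma dec_all {ω : ℂ} {σ : RatFunc ℂ →ₐ[ℂ] RatFunc ℂ}
    (hσ : σ RatFunc.X = RatFunc.C ω * (RatFunc.X)⁻¹) (hs : σ (sF ω) = sF ω)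
    (g : RatFunc ℂ) : Dec ω g := by
  rw [← RatFunc.num_div_denom g, div_eq_mul_inv]
  exact dec_mul (dec_poly g.num) (dec_inv hσ hs (dec_poly g.denom))

lemma fixed_mem_Rset {ω : ℂ} {σ : RatFunc ℂ →ₐ[ℂ] RatFunc ℂ} (hω : ω ≠ 0)
    (hσ : σ RatFunc.X = RatFunc.C ω * (RatFunc.X)⁻¹)
    {f : RatFunc ℂ} (hf : σ f = f) : f ∈ Rset ω := by
  have hs := sigma_sF hω hσ
  obtain ⟨a, ha, b, hb, rfl⟩ := dec_all hσ hs f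
  have h2 : σ (a + b * RatFunc.X) = a + b * (sF ω - RatFunc.X) := by
    rw [map_add, map_mul, sigma_fix hs ha, sigma_fix hs hb, sigma_X_eq hσ]
  rw [h2] at hf
  have hb0 : b = 0 := by
    by_contra hbne
    have h3 : b * (sF ω - RatFunc.X) = b * RatFunc.X := by linear_combination hf
    have h4 : sF ω - RatFunc.X = RatFunc.X := mul_left_cancel₀ hbne h3
    have hX : (RatFunc.X : RatFunc ℂ) ≠ 0 := RatFunc.X_ne_zero
    rw [sF] at h4
    field_simp at h4
    exact X_sq_sub_C_ne (ω := ω) (by linear_combination - h4)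
  rw [hb0]
  simpa using ha

lemma exists_lam {ω : ℂ} (hω : ω ≠ 0) (r : ℂ) : ∃ l : ℂ, l ≠ 0 ∧ l ^ 2 + ω = r * l := by
  have hdeg : (0 : WithBot ℕ) <
      (Polynomial.C 1 * Polynomial.X ^ 2 + Polynomial.C (-r) * Polynomial.X
        + Polynomial.C ω : ℂ[X]).degree := by
    rw [Polynomial.degree_quadratic one_ne_zero]
    norm_num
  obtain ⟨z, hz⟩ := Complex.exists_root hdeg
  have hz' : z ^ 2 - r * z + ω = 0 := by
    have := hz
    simp [Polynomial.IsRoot, Polynomial.eval_add, Polynomial.eval_mul] at this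
    linear_combination this
  refine ⟨z, ?_, by linear_combination hz'⟩
  intro h0
  rw [h0] at hz'
  simp at hz'
  exact hω hz'

lemma sF_sub_C_factor {ω : ℂ} (r : ℂ) {l : ℂ} (hl : l ≠ 0) (hrel : l ^ 2 + ω = r * l) :
    sF ω - RatFunc.C r = (RatFunc.X - RatFunc.C l) *
      (RatFunc.C l * RatFunc.X - RatFunc.C ω) * (RatFunc.C l * RatFunc.X)⁻¹ := by
  have hX : (RatFunc.X : RatFunc ℂ) ≠ 0 := RatFunc.X_ne_zero
  have hCl : (RatFunc.C l : RatFunc ℂ) ≠ 0 := C_ne_zero hl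
  have hC : RatFunc.C l * RatFunc.C l + RatFunc.C ω = RatFunc.C r * RatFunc.C l := by
    have h1 := congrArg RatFunc.C hrel
    rw [map_add, map_mul, map_pow] at h1
    linear_combination h1
  rw [sF]
  field_simp
  linear_combination RatFunc.X * hC

lemma multiset_prod_fin (M : Multiset ℂ) (f : ℂ → RatFunc ℂ) :
    ∃ (n : ℕ) (r : Fin n → ℂ), (M.map f).prod = ∏ i : Fin n, f (r i) := by
  induction M using Multiset.induction_on with
  | empty => exact ⟨0, Fin.elim0, by simp⟩
  | cons a M ih =>
      obtain ⟨n, r, hr⟩ := ih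
      exact ⟨n + 1, Fin.cons a r, by
        rw [Multiset.map_cons, Multiset.prod_cons, hr, Fin.prod_univ_succ]; simp⟩

lemma factor_poly {ω : ℂ} (hω : ω ≠ 0) {p : ℂ[X]} (hp : p ≠ 0) :
    ∃ (c : ℂ) (_ : c ≠ 0) (n : ℕ) (lam : Fin n → ℂ) (_ : ∀ i, lam i ≠ 0),
      Polynomial.aeval (sF ω) p = RatFunc.C c *
        (∏ i : Fin n, (RatFunc.X - RatFunc.C (lam i)) *
          (RatFunc.C (lam i) * RatFunc.X - RatFunc.C ω)) / RatFunc.X ^ n := by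
  have hsplit : p.Splits := IsAlgClosed.splits p
  have hfact := hsplit.eq_prod_roots
  obtain ⟨n, r, hr⟩ := multiset_prod_fin p.roots (fun a => sF ω - RatFunc.C a)
  have h1 : Polynomial.aeval (sF ω) p
      = RatFunc.C p.leadingCoeff * ∏ i : Fin n, (sF ω - RatFunc.C (r i)) := by
    conv_lhs => rw [hfact]
    rw [map_mul, Polynomial.aeval_C, RatFunc.algebraMap_eq_C, map_multiset_prod, ← hr,
      Multiset.map_map]
    congr 1
    apply congrArg Multiset.prod
    apply Multiset.map_congr rfl
    intro a _
    simp [RatFunc.algebraMap_eq_C]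
  set lam : Fin n → ℂ := fun i => (exists_lam hω (r i)).choose with hlamdef
  have hlam0 : ∀ i, lam i ≠ 0 := fun i => (exists_lam hω (r i)).choose_spec.1
  have hlamrel : ∀ i, (lam i) ^ 2 + ω = r i * lam i :=
    fun i => (exists_lam hω (r i)).choose_spec.2
  have h2 : ∀ i : Fin n, sF ω - RatFunc.C (r i)
      = (RatFunc.X - RatFunc.C (lam i)) * (RatFunc.C (lam i) * RatFunc.X - RatFunc.C ω)
        * (RatFunc.C (lam i) * RatFunc.X)⁻¹ :=
    fun i => sF_sub_C_factor (r i) (hlam0 i) (hlamrel i)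
  have hprodlam : (∏ i : Fin n, lam i) ≠ 0 := Finset.prod_ne_zero_iff.mpr fun i _ => hlam0 i
  refine ⟨p.leadingCoeff * (∏ i : Fin n, lam i)⁻¹,
    mul_ne_zero (Polynomial.leadingCoeff_ne_zero.mpr hp) (inv_ne_zero hprodlam),
    n, lam, hlam0, ?_⟩
  have hsplit2 : (∏ i : Fin n, RatFunc.C (lam i) * RatFunc.X)
      = RatFunc.C (∏ i : Fin n, lam i) * RatFunc.X ^ n := by
    rw [Finset.prod_mul_distrib, map_prod, Finset.prod_const, Finset.card_univ,
      Fintype.card_fin]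
  have e1 : (∏ i : Fin n, ((RatFunc.X - RatFunc.C (lam i)) *
        (RatFunc.C (lam i) * RatFunc.X - RatFunc.C ω)) * (RatFunc.C (lam i) * RatFunc.X)⁻¹)
      = (∏ i : Fin n, (RatFunc.X - RatFunc.C (lam i)) *
          (RatFunc.C (lam i) * RatFunc.X - RatFunc.C ω)) *
        ∏ i : Fin n, (RatFunc.C (lam i) * RatFunc.X)⁻¹ := Finset.prod_mul_distrib
  have e2 : (∏ i : Fin n, (RatFunc.C (lam i) * RatFunc.X)⁻¹)
      = (RatFunc.C (∏ i : Fin n, lam i) * RatFunc.X ^ n)⁻¹ := by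
    rw [← hsplit2, Finset.prod_inv_distrib]
  rw [h1, Finset.prod_congr rfl fun i _ => h2 i, e1, e2, map_mul, map_inv₀]
  have hX : (RatFunc.X : RatFunc ℂ) ≠ 0 := RatFunc.X_ne_zero
  have hCprod : (RatFunc.C (∏ i : Fin n, lam i) : RatFunc ℂ) ≠ 0 := C_ne_zero hprodlam
  field_simp

lemma pair_ne_zero {ω μ : ℂ} (hμ : μ ≠ 0) :
    RatFunc.C μ * RatFunc.X - RatFunc.C ω ≠ 0 := by
  intro h
  have hCμ : (RatFunc.C μ : RatFunc ℂ) ≠ 0 := C_ne_zero hμ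
  have h2 : RatFunc.C μ * (RatFunc.X - RatFunc.C (ω / μ)) = 0 := by
    rw [map_div₀]
    field_simp
    linear_combination h
  rcases mul_eq_zero.mp h2 with h3 | h3
  · exact hCμ h3
  · exact X_sub_C_ne _ h3

end Stmt18Aux

open Stmt18Aux in
/-- if `g ∈ ℂ(t)` is nonzero and `g(ωt^{-1}) + g(t) = 0` (where `σ`
is the substitution `t ↦ ωt^{-1}`), then
`g = b · t^k(t²-ω)·∏ᵢ(t-λᵢ)(λᵢt-ω) / ∏ᵢ(t-μᵢ)(μᵢt-ω)` with `m = l + k + 1`. -/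
theorem stmt_18 (ω : ℂ) (hω : ω ≠ 0)
    (σ : RatFunc ℂ →ₐ[ℂ] RatFunc ℂ)
    (hσ : σ RatFunc.X = RatFunc.C ω * (RatFunc.X)⁻¹)
    (g : RatFunc ℂ) (hg : g ≠ 0) (heq : σ g + g = 0) :
    ∃ (b : ℂ) (_ : b ≠ 0) (k : ℤ) (l m : ℕ) (_ : (m : ℤ) = (l : ℤ) + k + 1)
      (lam : Fin l → ℂ) (_ : ∀ i, lam i ≠ 0) (mu : Fin m → ℂ) (_ : ∀ i, mu i ≠ 0),
      g = RatFunc.C b * RatFunc.X ^ k * (RatFunc.X ^ 2 - RatFunc.C ω) *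
          (∏ i : Fin l, (RatFunc.X - RatFunc.C (lam i)) *
            (RatFunc.C (lam i) * RatFunc.X - RatFunc.C ω)) /
          (∏ i : Fin m, (RatFunc.X - RatFunc.C (mu i)) *
            (RatFunc.C (mu i) * RatFunc.X - RatFunc.C ω)) := by
  classical
  have hX : (RatFunc.X : RatFunc ℂ) ≠ 0 := RatFunc.X_ne_zero
  have hCω : (RatFunc.C ω : RatFunc ℂ) ≠ 0 := C_ne_zero hω
  have hσg : σ g = -g := eq_neg_of_add_eq_zero_left heq
  set u : RatFunc ℂ := (RatFunc.X)⁻¹ * (RatFunc.X ^ 2 - RatFunc.C ω) with hu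
  have hune : u ≠ 0 := mul_ne_zero (inv_ne_zero hX) X_sq_sub_C_ne
  have hσu : σ u = -u := by
    rw [hu, map_mul, map_inv₀, map_sub, map_pow, hσ, sigma_C]
    field_simp
    ring
  set f := g * u⁻¹ with hf
  have hfne : f ≠ 0 := mul_ne_zero hg (inv_ne_zero hune)
  have hσf : σ f = f := by
    have hinvneg : (-u)⁻¹ = -u⁻¹ := _root_.inv_neg
    rw [hf, map_mul, map_inv₀, hσg, hσu, hinvneg]
    ring
  obtain ⟨p, q, hq, hfpq⟩ := fixed_mem_Rset hω hσ hσf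
  have hqne := aeval_sF_ne_zero ω hq
  have hp : p ≠ 0 := by
    intro h
    rw [h] at hfpq
    simp at hfpq
    exact hfne hfpq
  have hpne := aeval_sF_ne_zero ω hp
  obtain ⟨c1, hc1, l, lam, hlam, hpfac⟩ := factor_poly hω hp
  obtain ⟨c2, hc2, m, mu, hmu, hqfac⟩ := factor_poly hω hq
  refine ⟨c1 / c2, div_ne_zero hc1 hc2, (m : ℤ) - l - 1, l, m, by ring, lam, hlam,
    mu, hmu, ?_⟩
  have hg' : g = u * (Polynomial.aeval (sF ω) p / Polynomial.aeval (sF ω) q) := by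
    rw [← hfpq, hf]
    field_simp
  have hP : (∏ i : Fin l, (RatFunc.X - RatFunc.C (lam i)) *
      (RatFunc.C (lam i) * RatFunc.X - RatFunc.C ω)) ≠ 0 :=
    Finset.prod_ne_zero_iff.mpr fun i _ =>
      mul_ne_zero (X_sub_C_ne _) (pair_ne_zero (hlam i))
  have hQ : (∏ i : Fin m, (RatFunc.X - RatFunc.C (mu i)) *
      (RatFunc.C (mu i) * RatFunc.X - RatFunc.C ω)) ≠ 0 :=
    Finset.prod_ne_zero_iff.mpr fun i _ =>
      mul_ne_zero (X_sub_C_ne _) (pair_ne_zero (hmu i))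
  have hzpow : (RatFunc.X : RatFunc ℂ) ^ ((m : ℤ) - l - 1)
      = RatFunc.X ^ m * (RatFunc.X ^ l)⁻¹ * (RatFunc.X)⁻¹ := by
    rw [zpow_sub₀ hX, zpow_sub₀ hX, zpow_natCast, zpow_natCast, zpow_one]
    rw [div_eq_mul_inv, div_eq_mul_inv]
  rw [hg', hpfac, hqfac, hzpow, hu, map_div₀]
  have hc2C : (RatFunc.C c2 : RatFunc ℂ) ≠ 0 := C_ne_zero hc2
  have hXl : (RatFunc.X : RatFunc ℂ) ^ l ≠ 0 := pow_ne_zero _ hX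
  have hXm : (RatFunc.X : RatFunc ℂ) ^ m ≠ 0 := pow_ne_zero _ hX
  field_simp
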